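/- For every integer n ≥ 2, every vector p = (p_1,…,p_n) ∈ [0,1]^n, and every real number q with 0 ≤ q ≤ min_{i∈[n]} p_i and q < 1, there exists a probability distribution θ on {0,1}^n such that P_θ(c_i = 1) = p_i for every i ∈ [n] and P_θ(c_i = 1, c_j = 1) = p_i p_j + (q/(1−q))·(1−p_i)(1−p_j) for every pair 1 ≤ i < j ≤ n. -/

import Mathlib

open Finset

noncomputable section

/-- Probability that at least `k` of the `n` coordinates equal `1` under the pmf `θ` on `{0,1}^n`. -/
def probGE (n : ℕ) (θ : (Fin n → Bool) → ℝ) (k : ℕ) : ℝ :=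
  ∑ c ∈ Finset.univ.filter
      (fun c : Fin n → Bool => k ≤ (Finset.univ.filter (fun i => c i = true)).card), θ c

/-- Probability that all `n` coordinates equal `1` under the pmf `θ` on `{0,1}^n`. -/
def probAll (n : ℕ) (θ : (Fin n → Bool) → ℝ) : ℝ :=
  ∑ c ∈ Finset.univ.filter (fun c : Fin n → Bool => ∀ i, c i = true), θ c

/-- `θ` is a probability mass function on `{0,1}^n`. -/
def IsDist (n : ℕ) (θ : (Fin n → Bool) → ℝ) : Prop :=
  (∀ c, 0 ≤ θ c) ∧ (∑ c, θ c = 1)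

/-- Univariate marginal probability `P_θ(c_i = 1)`. -/
def Marg (n : ℕ) (θ : (Fin n → Bool) → ℝ) (i : Fin n) : ℝ :=
  ∑ c ∈ Finset.univ.filter (fun c : Fin n → Bool => c i = true), θ c

/-- Bivariate probability `P_θ(c_i = 1, c_j = 1)`. -/
def Biv (n : ℕ) (θ : (Fin n → Bool) → ℝ) (i j : Fin n) : ℝ :=
  ∑ c ∈ Finset.univ.filter (fun c : Fin n → Bool => c i = true ∧ c j = true), θ c

/-- `θ` is a pairwise independent distribution with marginal vector `p`. -/
def PairwiseIndep (n : ℕ) (p : Fin n → ℝ) (θ : (Fin n → Bool) → ℝ) : Prop :=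
  IsDist n θ ∧ (∀ i, Marg n θ i = p i) ∧
    (∀ i j : Fin n, i < j → Biv n θ i j = p i * p j)

lemma sum_pi_bool' (n : ℕ) (f : Fin n → Bool → ℝ) :
    ∑ c : Fin n → Bool, ∏ i, f i (c i) = ∏ i, (f i true + f i false) := by
  rw [← Fintype.piFinset_univ, ← Finset.prod_univ_sum]
  simp [Fintype.sum_bool]

lemma delta_sum' (n : ℕ) (s : Finset (Fin n → Bool)) (hmem : (fun _ => true) ∈ s) :
    ∑ c ∈ s, (if (∀ i, c i = true) then (1:ℝ) else 0) = 1 := by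
  have h : ∀ c : Fin n → Bool, (∀ i, c i = true) ↔ c = fun _ => true := by
    intro c; simp [funext_iff]
  simp only [h]
  rw [Finset.sum_ite_eq' s (fun _ => true) (fun _ => (1:ℝ))]
  simp [hmem]

theorem stmt_1 (n : ℕ) (hn : 2 ≤ n) (p : Fin n → ℝ)
    (hp0 : ∀ i, 0 ≤ p i) (hp1 : ∀ i, p i ≤ 1)
    (q : ℝ) (hq0 : 0 ≤ q) (hq1 : q < 1) (hqp : ∀ i, q ≤ p i) :
    ∃ θ : (Fin n → Bool) → ℝ, IsDist n θ ∧ (∀ i, Marg n θ i = p i) ∧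
      (∀ i j : Fin n, i < j →
        Biv n θ i j = p i * p j + (q / (1 - q)) * (1 - p i) * (1 - p j)) := by
  have h1q : (0:ℝ) < 1 - q := by linarith
  set r : Fin n → ℝ := fun i => (p i - q) / (1 - q) with hr
  have hr0 : ∀ i, 0 ≤ r i := fun i => div_nonneg (by linarith [hqp i]) h1q.le
  have hr1 : ∀ i, r i ≤ 1 := fun i => by
    rw [hr]; dsimp only; rw [div_le_one h1q]; linarith [hp1 i]
  set f : Fin n → Bool → ℝ := fun i b => if b then r i else 1 - r i with hf
  set θ : (Fin n → Bool) → ℝ :=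
    fun c => q * (if (∀ i, c i = true) then 1 else 0) + (1 - q) * ∏ i, f i (c i) with hθ
  have hfnn : ∀ i b, 0 ≤ f i b := by
    intro i b; cases b <;> simp [hf] <;> [linarith [hr1 i]; exact hr0 i]
  have hrval : ∀ i, (1 - q) * r i = p i - q := by
    intro i; rw [hr]; field_simp
  refine ⟨θ, ⟨?_, ?_⟩, ?_, ?_⟩
  · -- nonneg
    intro c
    apply add_nonneg
    · positivity
    · exact mul_nonneg h1q.le (Finset.prod_nonneg fun i _ => hfnn i (c i))
  · -- sums to 1
    simp only [hθ]
    rw [Finset.sum_add_distrib, ← Finset.mul_sum, ← Finset.mul_sum, sum_pi_bool']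
    rw [delta_sum' n Finset.univ (Finset.mem_univ _)]
    have h2 : ∀ i : Fin n, f i true + f i false = 1 := by intro i; simp [hf]
    rw [Finset.prod_congr rfl (fun i _ => h2 i)]
    simp
  · -- marginals
    intro i
    unfold Marg
    simp only [hθ]
    rw [Finset.sum_add_distrib, ← Finset.mul_sum, ← Finset.mul_sum]
    rw [delta_sum' n _ (by simp)]
    have hprod : ∑ c ∈ Finset.univ.filter (fun c : Fin n → Bool => c i = true),
        ∏ j, f j (c j) = r i := by
      rw [Finset.sum_filter]
      have key : ∀ c : Fin n → Bool,
          (if c i = true then ∏ j, f j (c j) else 0)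
            = ∏ j, (if j = i then (if c j then r j else 0) else f j (c j)) := by
        intro c
        by_cases h : c i = true
        · simp only [h, if_true]
          refine Finset.prod_congr rfl fun j _ => ?_
          by_cases hj : j = i
          · subst hj; simp [h, hf]
          · simp [hj]
        · simp only [h, if_false]
          symm
          apply Finset.prod_eq_zero (Finset.mem_univ i)
          simp at h
          simp [h]
      simp only [key]
      rw [sum_pi_bool' n (fun j b => if j = i then (if b = true then r j else 0) else f j b)]
      have h3 : ∀ j : Fin n,
          ((if j = i then (if (true:Bool) = true then r j else 0) else f j true)
            + (if j = i then (if (false:Bool) = true then r j else 0) else f j false))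
            = if j = i then r j else 1 := by
        intro j; by_cases hj : j = i <;> simp [hj, hf]
      rw [Finset.prod_congr rfl (fun j _ => h3 j), Finset.prod_ite_eq' Finset.univ i r]
      simp
    rw [hprod, mul_one, hrval i]
    ring
  · -- bivariate
    intro i j hij
    have hne : i ≠ j := ne_of_lt hij
    unfold Biv
    simp only [hθ]
    rw [Finset.sum_add_distrib, ← Finset.mul_sum, ← Finset.mul_sum]
    rw [delta_sum' n _ (by simp)]
    have hprod : ∑ c ∈ Finset.univ.filter
        (fun c : Fin n → Bool => c i = true ∧ c j = true),
        ∏ k, f k (c k) = r i * r j := by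
      rw [Finset.sum_filter]
      have key : ∀ c : Fin n → Bool,
          (if c i = true ∧ c j = true then ∏ k, f k (c k) else 0)
            = ∏ k, (if k = i ∨ k = j then (if c k then r k else 0) else f k (c k)) := by
        intro c
        by_cases h : c i = true ∧ c j = true
        · simp only [h, if_true]
          refine Finset.prod_congr rfl fun k _ => ?_
          by_cases hk : k = i ∨ k = j
          · rcases hk with hk | hk <;> subst hk <;> simp [h.1, h.2, hf]
          · simp [hk]
        · simp only [h, if_false]
          symm
          rw [not_and_or] at h
          rcases h with h | h
          · apply Finset.prod_eq_zero (Finset.mem_univ i)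
            simp at h; simp [h]
          · apply Finset.prod_eq_zero (Finset.mem_univ j)
            simp at h; simp [h]
      simp only [key]
      rw [sum_pi_bool' n
        (fun k b => if k = i ∨ k = j then (if b = true then r k else 0) else f k b)]
      have h3 : ∀ k : Fin n,
          ((if k = i ∨ k = j then (if (true:Bool) = true then r k else 0) else f k true)
            + (if k = i ∨ k = j then (if (false:Bool) = true then r k else 0) else f k false))
            = if k ∈ ({i, j} : Finset (Fin n)) then r k else 1 := by
        intro k
        by_cases hk : k = i ∨ k = j <;>
          simp [hk, hf, Finset.mem_insert, Finset.mem_singleton]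
      rw [Finset.prod_congr rfl (fun k _ => h3 k), Finset.prod_ite_mem,
        Finset.univ_inter, Finset.prod_pair hne]
    rw [hprod, mul_one]
    have hi := hrval i
    have hj := hrval j
    have : (1 - q) * (r i * r j) = (p i - q) * (p j - q) / (1 - q) := by
      rw [hr]; field_simp
    rw [this]
    field_simp
    ring
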